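/- For the parabolic subgroup P of GLₙ(ℂ) and N a 2-nilpotent matrix corresponding via the quiver translation to the representation M = ⊕ U_{i,j}^{m_{i,j}} ⊕ ⊕ V_i^{n_i}, the dimension of the P-orbit of N equals Σ_{i=1}^{p} Σ_{x=1}^{i} b_i b_x − Σ_{i,j} m_{i,j} b_{i,j}(M) − Σ_i n_i a_i(M), where a_k(M) = dim Hom(V_k, M) and b_{k,l}(M) = dim Hom(U_{k,l}, M). -/

import Mathlib

/-- The Lie algebra of the standard parabolic of block assignment `β`:
block upper triangular matrices, as a `ℂ`-submodule of the matrix space. -/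
noncomputable def pAlg {n p : ℕ} (β : Fin n → Fin p) :
    Submodule ℂ (Matrix (Fin n) (Fin n) ℂ) where
  carrier := {A | ∀ i j, β j < β i → A i j = 0}
  add_mem' := by
    intro a b ha hb i j hij
    simp [Matrix.add_apply, ha i j hij, hb i j hij]
  zero_mem' := by intro i j _; rfl
  smul_mem' := by
    intro c A hA i j hij
    simp [Matrix.smul_apply, hA i j hij]

/-- The Lie algebra of the stabilizer of `N` in the parabolic:
block upper triangular matrices commuting with `N`. -/
noncomputable def stabAlg {n p : ℕ} (β : Fin n → Fin p) (N : Matrix (Fin n) (Fin n) ℂ) :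
    Submodule ℂ (Matrix (Fin n) (Fin n) ℂ) where
  carrier := {A | (∀ i j, β j < β i → A i j = 0) ∧ A * N = N * A}
  add_mem' := by
    intro a b ha hb
    refine ⟨fun i j hij => ?_, ?_⟩
    · simp [Matrix.add_apply, ha.1 i j hij, hb.1 i j hij]
    · rw [Matrix.add_mul, Matrix.mul_add, ha.2, hb.2]
  zero_mem' := ⟨fun i j _ => rfl, by simp⟩
  smul_mem' := by
    intro c A hA
    refine ⟨fun i j hij => ?_, ?_⟩
    · simp [Matrix.smul_apply, hA.1 i j hij]
    · rw [Matrix.smul_mul, Matrix.mul_smul, hA.2]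

open scoped Classical

lemma finrank_eq_card_of_bij {n : ℕ} (W : Submodule ℂ (Matrix (Fin n) (Fin n) ℂ))
    (ι : Type) [Fintype ι] (pos : ι → Fin n × Fin n)
    (hinj : ∀ A ∈ W, (∀ i, A (pos i).1 (pos i).2 = 0) → A = 0)
    (hsurj : ∀ c : ι → ℂ, ∃ A ∈ W, ∀ i, A (pos i).1 (pos i).2 = c i) :
    Module.finrank ℂ W = Fintype.card ι := by
  let φ : W →ₗ[ℂ] (ι → ℂ) :=
    { toFun := fun A i => A.1 (pos i).1 (pos i).2
      map_add' := fun A B => rfl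
      map_smul' := fun c A => rfl }
  have hb : Function.Bijective φ := by
    constructor
    · intro A B h
      have : (A : Matrix (Fin n) (Fin n) ℂ) - B = 0 := by
        apply hinj _ (W.sub_mem A.2 B.2)
        intro i
        have := congrFun h i
        simp only [φ, LinearMap.coe_mk, AddHom.coe_mk] at this
        simp [Matrix.sub_apply, this]
        exact sub_eq_zero.mpr this
      ext1
      exact sub_eq_zero.mp this
    · intro c
      obtain ⟨A, hA, hAc⟩ := hsurj c
      exact ⟨⟨A, hA⟩, funext hAc⟩
  rw [(LinearEquiv.ofBijective φ hb).finrank_eq, Module.finrank_pi]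

lemma sum_swap4 {α γ M : Type*} [AddCommMonoid M] [Fintype α] [Fintype γ] (F : γ → γ → α → α → M) :
    ∑ c : γ, ∑ d : γ, ∑ u : α, ∑ v : α, F c d u v
      = ∑ u : α, ∑ v : α, ∑ c : γ, ∑ d : γ, F c d u v :=
  calc ∑ c : γ, ∑ d : γ, ∑ u : α, ∑ v : α, F c d u v
      = ∑ c : γ, ∑ u : α, ∑ d : γ, ∑ v : α, F c d u v :=
        Finset.sum_congr rfl fun c _ => Finset.sum_comm
    _ = ∑ u : α, ∑ c : γ, ∑ d : γ, ∑ v : α, F c d u v := Finset.sum_comm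
    _ = ∑ u : α, ∑ c : γ, ∑ v : α, ∑ d : γ, F c d u v :=
        Finset.sum_congr rfl fun u _ => Finset.sum_congr rfl fun c _ => Finset.sum_comm
    _ = ∑ u : α, ∑ v : α, ∑ c : γ, ∑ d : γ, F c d u v :=
        Finset.sum_congr rfl fun u _ => Finset.sum_comm

lemma card_pair_filter {α γ : Type*} [Fintype α] [DecidableEq γ] [Fintype γ] (φ : α → γ)
    (P Q : α → Prop) [DecidablePred P] [DecidablePred Q]
    (R : γ → γ → Prop) [∀ c d, Decidable (R c d)] :
    ((Finset.univ ×ˢ Finset.univ).filter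
        (fun q : α × α => P q.1 ∧ Q q.2 ∧ R (φ q.1) (φ q.2))).card
    = ∑ c : γ, ∑ d : γ, if R c d then
        ((Finset.univ.filter fun a => P a ∧ φ a = c).card *
          (Finset.univ.filter fun a => Q a ∧ φ a = d).card) else 0 := by
  have h1 : ((Finset.univ ×ˢ Finset.univ).filter
        (fun q : α × α => P q.1 ∧ Q q.2 ∧ R (φ q.1) (φ q.2))).card
      = ∑ q : α × α, if P q.1 ∧ Q q.2 ∧ R (φ q.1) (φ q.2) then 1 else 0 := by
    rw [Finset.card_filter]
    rw [← Finset.univ_product_univ]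
  rw [h1, Fintype.sum_prod_type]
  have h2 : ∀ c d : γ, (if R c d then
        ((Finset.univ.filter fun a => P a ∧ φ a = c).card *
          (Finset.univ.filter fun a => Q a ∧ φ a = d).card) else 0)
      = ∑ u : α, ∑ v : α, if (P u ∧ φ u = c) ∧ (Q v ∧ φ v = d) ∧ R c d then 1 else 0 := by
    intro c d
    by_cases h : R c d
    · simp only [h, if_true, and_true]
      rw [Finset.card_filter, Finset.card_filter, Finset.sum_mul_sum]
      refine Finset.sum_congr rfl fun u _ => Finset.sum_congr rfl fun v _ => ?_
      by_cases h1 : P u ∧ φ u = c <;> by_cases h2 : Q v ∧ φ v = d <;>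
        simp [h1, h2]
    · simp only [h, if_false, and_false]
      simp
  simp only [h2]
  rw [sum_swap4]
  refine Finset.sum_congr rfl fun u _ => Finset.sum_congr rfl fun v _ => ?_
  by_cases hu : P u
  · by_cases hv : Q v
    · rw [Finset.sum_eq_single (φ u)]
      · rw [Finset.sum_eq_single (φ v)]
        · simp [hu, hv]
        · intro d _ hd; simp [Ne.symm hd]
        · simp
      · intro c _ hc; simp [Ne.symm hc]
      · simp
    · simp [hv]
  · simp [hu]
lemma finrank_pAlg {n p : ℕ} (β : Fin n → Fin p) :
    Module.finrank ℂ (pAlg β)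
      = ((Finset.univ ×ˢ Finset.univ).filter
          (fun q : Fin n × Fin n => β q.1 ≤ β q.2)).card := by
  classical
  rw [← Fintype.card_coe]
  refine finrank_eq_card_of_bij _ _ (fun i => i.1) ?_ ?_
  · intro A hA h0
    ext u v
    by_cases h : β u ≤ β v
    · exact h0 ⟨(u, v), by simp [h]⟩
    · exact hA u v (lt_of_not_ge h)
  · intro c
    refine ⟨fun u v => if h : β u ≤ β v then c ⟨(u, v), by simp [h]⟩ else 0, ?_, ?_⟩
    · intro u v huv
      simp only []
      rw [dif_neg (not_le.mpr huv)]
    · rintro ⟨⟨u, v⟩, hq⟩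
      simp only [Finset.mem_filter] at hq
      simp only []
      exact dif_pos hq.2
section NStruct
variable {n : ℕ} (N : Matrix (Fin n) (Fin n) ℂ)

def Tg (u : Fin n) : Prop := ∃ v, N u v ≠ 0
def Sc (v : Fin n) : Prop := ∃ u, N u v ≠ 0

noncomputable def gN (u : Fin n) : Fin n := if h : Tg N u then h.choose else u
noncomputable def fN (v : Fin n) : Fin n := if h : Sc N v then h.choose else v

lemma hgN {u : Fin n} (h : Tg N u) : N u (gN N u) ≠ 0 := by
  rw [gN, dif_pos h]; exact h.choose_spec

lemma hfN {v : Fin n} (h : Sc N v) : N (fN N v) v ≠ 0 := by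
  rw [fN, dif_pos h]; exact h.choose_spec

lemma g_unique (hrow : ∀ i j j', N i j ≠ 0 → N i j' ≠ 0 → j = j')
    {u v : Fin n} (h : N u v ≠ 0) : gN N u = v :=
  hrow u _ v (hgN N ⟨v, h⟩) h

lemma f_unique (hcol : ∀ i i' j, N i j ≠ 0 → N i' j ≠ 0 → i = i')
    {u v : Fin n} (h : N u v ≠ 0) : fN N v = u :=
  hcol _ u v (hfN N ⟨u, h⟩) h

lemma Tg_fN {v : Fin n} (h : Sc N v) : Tg N (fN N v) := ⟨v, hfN N h⟩

lemma Sc_gN {u : Fin n} (h : Tg N u) : Sc N (gN N u) := ⟨u, hgN N h⟩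

lemma fgN (hcol : ∀ i i' j, N i j ≠ 0 → N i' j ≠ 0 → i = i')
    {u : Fin n} (h : Tg N u) : fN N (gN N u) = u :=
  f_unique N hcol (hgN N h)

lemma gfN (hrow : ∀ i j j', N i j ≠ 0 → N i j' ≠ 0 → j = j')
    {v : Fin n} (h : Sc N v) : gN N (fN N v) = v :=
  g_unique N hrow (hfN N h)

lemma disjTS (hrow : ∀ i j j', N i j ≠ 0 → N i j' ≠ 0 → j = j')
    (hsq : N ^ 2 = 0) {u : Fin n} (hS : Sc N u) (hT : Tg N u) : False := by
  obtain ⟨a, ha⟩ := hS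
  obtain ⟨b, hb⟩ := hT
  have h2 : (N * N) a b = 0 := by rw [← pow_two, hsq]; rfl
  rw [Matrix.mul_apply] at h2
  rw [Finset.sum_eq_single u] at h2
  · exact mul_ne_zero ha hb h2
  · intro k _ hk
    by_cases h : N a k = 0
    · rw [h, zero_mul]
    · exact absurd (hrow a k u h ha) hk
  · simp

lemma hg1 (h01 : ∀ i j, N i j = 0 ∨ N i j = 1) {u : Fin n} (h : Tg N u) :
    N u (gN N u) = 1 :=
  (h01 u _).resolve_left (hgN N h)

lemma hf1 (h01 : ∀ i j, N i j = 0 ∨ N i j = 1) {v : Fin n} (h : Sc N v) :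
    N (fN N v) v = 1 :=
  (h01 _ v).resolve_left (hfN N h)

lemma mulN_apply (hcol : ∀ i i' j, N i j ≠ 0 → N i' j ≠ 0 → i = i')
    (h01 : ∀ i j, N i j = 0 ∨ N i j = 1)
    (A : Matrix (Fin n) (Fin n) ℂ) (u v : Fin n) :
    (A * N) u v = if Sc N v then A u (fN N v) else 0 := by
  rw [Matrix.mul_apply]
  by_cases h : Sc N v
  · rw [if_pos h, Finset.sum_eq_single (fN N v)]
    · rw [hf1 N h01 h, mul_one]
    · intro k _ hk
      by_cases hz : N k v = 0
      · rw [hz, mul_zero]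
      · exact absurd (f_unique N hcol hz).symm hk
    · simp
  · rw [if_neg h]
    apply Finset.sum_eq_zero
    intro k _
    have : N k v = 0 := by
      by_contra hz; exact h ⟨k, hz⟩
    rw [this, mul_zero]

lemma Nmul_apply (hrow : ∀ i j j', N i j ≠ 0 → N i j' ≠ 0 → j = j')
    (h01 : ∀ i j, N i j = 0 ∨ N i j = 1)
    (A : Matrix (Fin n) (Fin n) ℂ) (u v : Fin n) :
    (N * A) u v = if Tg N u then A (gN N u) v else 0 := by
  rw [Matrix.mul_apply]
  by_cases h : Tg N u
  · rw [if_pos h, Finset.sum_eq_single (gN N u)]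
    · rw [hg1 N h01 h, one_mul]
    · intro k _ hk
      by_cases hz : N u k = 0
      · rw [hz, zero_mul]
      · exact absurd (g_unique N hrow hz).symm hk
    · simp
  · rw [if_neg h]
    apply Finset.sum_eq_zero
    intro k _
    have : N u k = 0 := by
      by_contra hz; exact h ⟨k, hz⟩
    rw [this, zero_mul]

lemma comm_iff (hrow : ∀ i j j', N i j ≠ 0 → N i j' ≠ 0 → j = j')
    (hcol : ∀ i i' j, N i j ≠ 0 → N i' j ≠ 0 → i = i')
    (h01 : ∀ i j, N i j = 0 ∨ N i j = 1)
    (A : Matrix (Fin n) (Fin n) ℂ) :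
    A * N = N * A ↔
      (∀ u v, Tg N v → ¬ Tg N u → A u v = 0) ∧
      (∀ u v, Sc N u → ¬ Sc N v → A u v = 0) ∧
      (∀ u v, Tg N u → Tg N v → A u v = A (gN N u) (gN N v)) := by
  constructor
  · intro hc
    have he : ∀ u v, (if Sc N v then A u (fN N v) else 0)
        = (if Tg N u then A (gN N u) v else 0) := by
      intro u v
      rw [← mulN_apply N hcol h01, ← Nmul_apply N hrow h01, hc]
    refine ⟨?_, ?_, ?_⟩
    · intro u v hv hu
      have := he u (gN N v)
      rw [if_pos (Sc_gN N hv), if_neg hu, fgN N hcol hv] at this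
      exact this
    · intro u v hu hv
      have := he (fN N u) v
      rw [if_neg hv, if_pos (Tg_fN N hu), gfN N hrow hu] at this
      exact this.symm
    · intro u v hu hv
      have := he u (gN N v)
      rw [if_pos (Sc_gN N hv), if_pos hu, fgN N hcol hv] at this
      exact this
  · rintro ⟨hz1, hz2, hid⟩
    ext u v
    rw [mulN_apply N hcol h01, Nmul_apply N hrow h01]
    by_cases hv : Sc N v <;> by_cases hu : Tg N u
    · rw [if_pos hv, if_pos hu]
      rw [hid u (fN N v) hu (Tg_fN N hv), gfN N hrow hv]
    · rw [if_pos hv, if_neg hu]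
      exact hz1 u (fN N v) (Tg_fN N hv) hu
    · rw [if_neg hv, if_pos hu]
      exact (hz2 (gN N u) v (Sc_gN N hu) hv).symm
    · rw [if_neg hv, if_neg hu]

end NStruct

def FreeP {n p : ℕ} (β : Fin n → Fin p) (N : Matrix (Fin n) (Fin n) ℂ)
    (q : Fin n × Fin n) : Prop :=
  (¬ Sc N q.1 ∧ ¬ Tg N q.2 ∧ β q.1 ≤ β q.2) ∨
    (Tg N q.1 ∧ Tg N q.2 ∧ (β q.1 ≤ β q.2 ∧ β (gN N q.1) ≤ β (gN N q.2)))

lemma finrank_stabAlg {n p : ℕ} (β : Fin n → Fin p) (N : Matrix (Fin n) (Fin n) ℂ)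
    (hsq : N ^ 2 = 0) (h01 : ∀ i j, N i j = 0 ∨ N i j = 1)
    (hrow : ∀ i j j', N i j ≠ 0 → N i j' ≠ 0 → j = j')
    (hcol : ∀ i i' j, N i j ≠ 0 → N i' j ≠ 0 → i = i') :
    Module.finrank ℂ (stabAlg β N)
      = Fintype.card {q : Fin n × Fin n // FreeP β N q} := by
  refine finrank_eq_card_of_bij _ _ (fun i => i.1) ?_ ?_
  · -- injectivity
    intro A hA h0
    obtain ⟨tri, hcomm⟩ := hA
    obtain ⟨hz1, hz2, hid⟩ := (comm_iff N hrow hcol h01 A).mp hcomm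
    ext u v
    show A u v = 0
    by_cases hle : β u ≤ β v
    · by_cases hSu : Sc N u
      · by_cases hSv : Sc N v
        · have hTu' : Tg N (fN N u) := Tg_fN N hSu
          have hTv' : Tg N (fN N v) := Tg_fN N hSv
          have key : A u v = A (fN N u) (fN N v) := by
            have h := hid (fN N u) (fN N v) hTu' hTv'
            rw [gfN N hrow hSu, gfN N hrow hSv] at h
            exact h.symm
          rw [key]
          by_cases hle' : β (fN N u) ≤ β (fN N v)
          · exact h0 ⟨(fN N u, fN N v), Or.inr ⟨hTu', hTv', hle',
              by rw [gfN N hrow hSu, gfN N hrow hSv]; exact hle⟩⟩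
          · exact tri _ _ (lt_of_not_ge hle')
        · exact hz2 u v hSu hSv
      · by_cases hTv : Tg N v
        · by_cases hTu : Tg N u
          · by_cases hle' : β (gN N u) ≤ β (gN N v)
            · exact h0 ⟨(u, v), Or.inr ⟨hTu, hTv, hle, hle'⟩⟩
            · rw [hid u v hTu hTv]
              exact tri _ _ (lt_of_not_ge hle')
          · exact hz1 u v hTv hTu
        · exact h0 ⟨(u, v), Or.inl ⟨hSu, hTv, hle⟩⟩
    · exact tri u v (lt_of_not_ge hle)
  · -- surjectivity
    intro c
    refine ⟨fun u v =>
      if h : FreeP β N (u, v) then c ⟨(u, v), h⟩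
      else if h2 : Sc N u ∧ Sc N v ∧ FreeP β N (fN N u, fN N v) then
        c ⟨(fN N u, fN N v), h2.2.2⟩
      else 0, ?_, ?_⟩
    · -- membership
      set A : Matrix (Fin n) (Fin n) ℂ := fun u v =>
        if h : FreeP β N (u, v) then c ⟨(u, v), h⟩
        else if h2 : Sc N u ∧ Sc N v ∧ FreeP β N (fN N u, fN N v) then
          c ⟨(fN N u, fN N v), h2.2.2⟩
        else 0 with hAdef
      have hAuv : ∀ u v, A u v =
          if h : FreeP β N (u, v) then c ⟨(u, v), h⟩
          else if h2 : Sc N u ∧ Sc N v ∧ FreeP β N (fN N u, fN N v) then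
            c ⟨(fN N u, fN N v), h2.2.2⟩
          else 0 := fun u v => rfl
      have fact_tri : ∀ u v, β v < β u → A u v = 0 := by
        intro u v hlt
        rw [hAuv, dif_neg, dif_neg]
        · rintro ⟨hSu, hSv, hF⟩
          rcases hF with ⟨_, hTv', _⟩ | ⟨_, _, _, hle'⟩
          · exact hTv' (Tg_fN N hSv)
          · rw [gfN N hrow hSu, gfN N hrow hSv] at hle'
            exact absurd hle' (not_le.mpr hlt)
        · rintro (⟨_, _, hle⟩ | ⟨_, _, hle, _⟩) <;> exact absurd hle (not_le.mpr hlt)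
      have fact_z1 : ∀ u v, Tg N v → ¬ Tg N u → A u v = 0 := by
        intro u v hTv hTu
        rw [hAuv, dif_neg, dif_neg]
        · rintro ⟨_, hSv, _⟩
          exact disjTS N hrow hsq hSv hTv
        · rintro (⟨_, hTv', _⟩ | ⟨hTu', _, _⟩)
          · exact hTv' hTv
          · exact hTu hTu'
      have fact_z2 : ∀ u v, Sc N u → ¬ Sc N v → A u v = 0 := by
        intro u v hSu hSv
        rw [hAuv, dif_neg, dif_neg]
        · rintro ⟨_, hSv', _⟩
          exact hSv hSv'
        · rintro (⟨hSu', _, _⟩ | ⟨hTu', _, _⟩)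
          · exact hSu' hSu
          · exact disjTS N hrow hsq hSu hTu'
      have fact_id : ∀ u v, Tg N u → Tg N v → A u v = A (gN N u) (gN N v) := by
        intro u v hTu hTv
        have hSu' : Sc N (gN N u) := Sc_gN N hTu
        have hSv' : Sc N (gN N v) := Sc_gN N hTv
        have hnSu : ¬ Sc N u := fun h => disjTS N hrow hsq h hTu
        have hnF' : ¬ FreeP β N (gN N u, gN N v) := by
          rintro (⟨hSu'', _, _⟩ | ⟨hTu', _, _⟩)
          · exact hSu'' hSu'
          · exact disjTS N hrow hsq hSu' hTu'
        have hfg : (fN N (gN N u), fN N (gN N v)) = (u, v) := by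
          rw [fgN N hcol hTu, fgN N hcol hTv]
        by_cases hF : FreeP β N (u, v)
        · rw [hAuv, dif_pos hF, hAuv, dif_neg hnF',
            dif_pos ⟨hSu', hSv', by rw [hfg]; exact hF⟩]
          exact congrArg c (Subtype.ext hfg.symm)
        · rw [hAuv, dif_neg hF, dif_neg (fun h2 => hnSu h2.1),
            hAuv, dif_neg hnF', dif_neg]
          rintro ⟨_, _, hF'⟩
          rw [hfg] at hF'
          exact hF hF'
      exact ⟨fun i j hij => fact_tri i j hij,
        (comm_iff N hrow hcol h01 A).mpr ⟨fact_z1, fact_z2, fact_id⟩⟩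
    · rintro ⟨⟨u, v⟩, h⟩
      exact dif_pos h

section Counting
variable {n p : ℕ} (β : Fin n → Fin p) (N : Matrix (Fin n) (Fin n) ℂ)

lemma card_free_split (hsq : N ^ 2 = 0)
    (hrow : ∀ i j j', N i j ≠ 0 → N i j' ≠ 0 → j = j') :
    Fintype.card {q : Fin n × Fin n // FreeP β N q}
      = ((Finset.univ ×ˢ Finset.univ).filter
          (fun q : Fin n × Fin n => ¬ Sc N q.1 ∧ ¬ Tg N q.2 ∧ β q.1 ≤ β q.2)).card
        + ((Finset.univ ×ˢ Finset.univ).filter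
          (fun q : Fin n × Fin n => Tg N q.1 ∧ Tg N q.2 ∧
            (β q.1 ≤ β q.2 ∧ β (gN N q.1) ≤ β (gN N q.2)))).card := by
  rw [Fintype.card_subtype, ← Finset.univ_product_univ]
  have hsplit : ((Finset.univ ×ˢ Finset.univ).filter (fun q : Fin n × Fin n => FreeP β N q))
      = ((Finset.univ ×ˢ Finset.univ).filter
          (fun q : Fin n × Fin n => ¬ Sc N q.1 ∧ ¬ Tg N q.2 ∧ β q.1 ≤ β q.2))
        ∪ ((Finset.univ ×ˢ Finset.univ).filter
          (fun q : Fin n × Fin n => Tg N q.1 ∧ Tg N q.2 ∧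
            (β q.1 ≤ β q.2 ∧ β (gN N q.1) ≤ β (gN N q.2)))) := by
    ext q
    rw [Finset.mem_filter, Finset.mem_union, Finset.mem_filter, Finset.mem_filter]
    unfold FreeP
    tauto
  rw [hsplit, Finset.card_union_of_disjoint]
  rw [Finset.disjoint_left]
  intro q hq1 hq2
  simp only [Finset.mem_filter] at hq1 hq2
  exact hq1.2.2.1 hq2.2.2.1

-- number of arrows with target block k and source block l
lemma card_arrows (hrow : ∀ i j j', N i j ≠ 0 → N i j' ≠ 0 → j = j')
    (m : Fin p → Fin p → ℕ)
    (hm : ∀ i j, m i j =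
      Set.ncard {q : Fin n × Fin n | N q.1 q.2 ≠ 0 ∧ β q.1 = i ∧ β q.2 = j})
    (k l : Fin p) :
    ((Finset.univ : Finset (Fin n × Fin n)).filter
        (fun q => N q.1 q.2 ≠ 0 ∧ β q.1 = k ∧ β q.2 = l)).card = m k l := by
  rw [hm]
  have hset : {q : Fin n × Fin n | N q.1 q.2 ≠ 0 ∧ β q.1 = k ∧ β q.2 = l}
      = ↑((Finset.univ : Finset (Fin n × Fin n)).filter
        (fun q => N q.1 q.2 ≠ 0 ∧ β q.1 = k ∧ β q.2 = l)) := by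
    ext q; simp
  rw [hset, Set.ncard_coe_finset]

lemma card_tgt_block (hrow : ∀ i j j', N i j ≠ 0 → N i j' ≠ 0 → j = j')
    (m : Fin p → Fin p → ℕ)
    (hm : ∀ i j, m i j =
      Set.ncard {q : Fin n × Fin n | N q.1 q.2 ≠ 0 ∧ β q.1 = i ∧ β q.2 = j})
    (x : Fin p × Fin p) :
    ((Finset.univ : Finset (Fin n)).filter
        (fun a => Tg N a ∧ (β a, β (gN N a)) = x)).card = m x.1 x.2 := by
  rw [← card_arrows β N hrow m hm]
  apply Finset.card_bij (fun a _ => (a, gN N a))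
  · intro a ha
    simp only [Finset.mem_filter] at ha ⊢
    obtain ⟨-, hT, hx⟩ := ha
    exact ⟨Finset.mem_univ _, hgN N hT,
      (Prod.ext_iff.mp hx).1, (Prod.ext_iff.mp hx).2⟩
  · intro a1 _ a2 _ h
    exact congrArg Prod.fst h
  · intro q hq
    simp only [Finset.mem_filter] at hq
    obtain ⟨-, hN, hk, hl⟩ := hq
    refine ⟨q.1, ?_, ?_⟩
    · simp only [Finset.mem_filter]
      refine ⟨Finset.mem_univ _, ⟨q.2, hN⟩, ?_⟩
      rw [g_unique N hrow hN, hk, hl]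
    · rw [g_unique N hrow hN]

lemma card_src_block (hrow : ∀ i j j', N i j ≠ 0 → N i j' ≠ 0 → j = j')
    (hcol : ∀ i i' j, N i j ≠ 0 → N i' j ≠ 0 → i = i')
    (m : Fin p → Fin p → ℕ)
    (hm : ∀ i j, m i j =
      Set.ncard {q : Fin n × Fin n | N q.1 q.2 ≠ 0 ∧ β q.1 = i ∧ β q.2 = j})
    (k l : Fin p) :
    ((Finset.univ : Finset (Fin n)).filter
        (fun a => Sc N a ∧ β (fN N a) = k ∧ β a = l)).card = m k l := by
  rw [← card_arrows β N hrow m hm]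
  apply Finset.card_bij (fun a _ => (fN N a, a))
  · intro a ha
    simp only [Finset.mem_filter] at ha ⊢
    obtain ⟨-, hS, hk, hl⟩ := ha
    exact ⟨Finset.mem_univ _, hfN N hS, hk, hl⟩
  · intro a1 _ a2 _ h
    exact congrArg Prod.snd h
  · intro q hq
    simp only [Finset.mem_filter] at hq
    obtain ⟨-, hN, hk, hl⟩ := hq
    refine ⟨q.2, ?_, ?_⟩
    · simp only [Finset.mem_filter]
      refine ⟨Finset.mem_univ _, ⟨q.1, hN⟩, ?_, hl⟩
      rw [f_unique N hcol hN, hk]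
    · rw [f_unique N hcol hN]

end Counting

section BlockCounts
variable {n p : ℕ} (β : Fin n → Fin p) (N : Matrix (Fin n) (Fin n) ℂ)
  (hsq : N ^ 2 = 0)
  (hrow : ∀ i j j', N i j ≠ 0 → N i j' ≠ 0 → j = j')
  (hcol : ∀ i i' j, N i j ≠ 0 → N i' j ≠ 0 → i = i')
  (m : Fin p → Fin p → ℕ)
  (hm : ∀ i j, m i j =
      Set.ncard {q : Fin n × Fin n | N q.1 q.2 ≠ 0 ∧ β q.1 = i ∧ β q.2 = j})

include hrow hm in
lemma card_tgt_fiber (k : Fin p) :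
    ((Finset.univ : Finset (Fin n)).filter (fun a => Tg N a ∧ β a = k)).card
      = ∑ l : Fin p, m k l := by
  rw [Finset.card_eq_sum_card_fiberwise
    (f := fun a => β (gN N a)) (t := Finset.univ) (fun a _ => Finset.mem_univ _)]
  refine Finset.sum_congr rfl fun l _ => ?_
  rw [Finset.filter_filter]
  have heq : (Finset.univ : Finset (Fin n)).filter
        (fun a => (Tg N a ∧ β a = k) ∧ β (gN N a) = l)
      = (Finset.univ : Finset (Fin n)).filter
        (fun a => Tg N a ∧ (β a, β (gN N a)) = (k, l)) := by
    ext a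
    simp only [Finset.mem_filter, Finset.mem_univ, true_and, Prod.ext_iff]
    tauto
  rw [heq]
  exact card_tgt_block β N hrow m hm (k, l)

include hrow hcol hm in
lemma card_src_fiber (k : Fin p) :
    ((Finset.univ : Finset (Fin n)).filter (fun a => Sc N a ∧ β a = k)).card
      = ∑ l : Fin p, m l k := by
  rw [Finset.card_eq_sum_card_fiberwise
    (f := fun a => β (fN N a)) (t := Finset.univ) (fun a _ => Finset.mem_univ _)]
  refine Finset.sum_congr rfl fun l _ => ?_
  rw [Finset.filter_filter]
  have heq : (Finset.univ : Finset (Fin n)).filter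
        (fun a => (Sc N a ∧ β a = k) ∧ β (fN N a) = l)
      = (Finset.univ : Finset (Fin n)).filter
        (fun a => Sc N a ∧ β (fN N a) = l ∧ β a = k) := by
    ext a
    simp only [Finset.mem_filter, Finset.mem_univ, true_and]
    tauto
  rw [heq]
  exact card_src_block β N hrow hcol m hm l k

include hsq hrow hcol hm in
lemma card_dot (b : Fin p → ℕ)
    (hb : ∀ k, (Finset.univ.filter fun x => β x = k).card = b k)
    (nm : Fin p → ℕ)
    (hnm : ∀ i, nm i + (∑ j, (m i j + m j i)) = b i) (k : Fin p) :
    ((Finset.univ : Finset (Fin n)).filter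
      (fun a => ¬ Sc N a ∧ ¬ Tg N a ∧ β a = k)).card = nm k := by
  have hsplit : ((Finset.univ : Finset (Fin n)).filter (fun a => β a = k))
      = ((Finset.univ : Finset (Fin n)).filter (fun a => ¬ Sc N a ∧ ¬ Tg N a ∧ β a = k))
        ∪ (((Finset.univ : Finset (Fin n)).filter (fun a => Tg N a ∧ β a = k))
          ∪ ((Finset.univ : Finset (Fin n)).filter (fun a => Sc N a ∧ β a = k))) := by
    ext a
    simp only [Finset.mem_filter, Finset.mem_union, Finset.mem_univ, true_and]
    tauto
  have hd1 : Disjoint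
      ((Finset.univ : Finset (Fin n)).filter (fun a => Tg N a ∧ β a = k))
      ((Finset.univ : Finset (Fin n)).filter (fun a => Sc N a ∧ β a = k)) := by
    rw [Finset.disjoint_left]
    intro a ha1 ha2
    simp only [Finset.mem_filter] at ha1 ha2
    exact disjTS N hrow hsq ha2.2.1 ha1.2.1
  have hd2 : Disjoint
      ((Finset.univ : Finset (Fin n)).filter (fun a => ¬ Sc N a ∧ ¬ Tg N a ∧ β a = k))
      (((Finset.univ : Finset (Fin n)).filter (fun a => Tg N a ∧ β a = k))
        ∪ ((Finset.univ : Finset (Fin n)).filter (fun a => Sc N a ∧ β a = k))) := by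
    rw [Finset.disjoint_left]
    intro a ha1 ha2
    simp only [Finset.mem_filter, Finset.mem_union] at ha1 ha2
    rcases ha2 with h | h
    · exact ha1.2.2.1 h.2.1
    · exact ha1.2.1 h.2.1
  have hcards := hb k
  rw [hsplit, Finset.card_union_of_disjoint hd2, Finset.card_union_of_disjoint hd1,
    card_tgt_fiber β N hrow m hm k, card_src_fiber β N hrow hcol m hm k] at hcards
  have h2 := hnm k
  rw [Finset.sum_add_distrib] at h2
  omega

include hsq hrow hcol hm in
lemma card_nSc (b : Fin p → ℕ)
    (hb : ∀ k, (Finset.univ.filter fun x => β x = k).card = b k)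
    (nm : Fin p → ℕ)
    (hnm : ∀ i, nm i + (∑ j, (m i j + m j i)) = b i) (k : Fin p) :
    ((Finset.univ : Finset (Fin n)).filter (fun a => ¬ Sc N a ∧ β a = k)).card
      = nm k + ∑ l : Fin p, m k l := by
  have hsplit : ((Finset.univ : Finset (Fin n)).filter (fun a => ¬ Sc N a ∧ β a = k))
      = ((Finset.univ : Finset (Fin n)).filter (fun a => ¬ Sc N a ∧ ¬ Tg N a ∧ β a = k))
        ∪ ((Finset.univ : Finset (Fin n)).filter (fun a => Tg N a ∧ β a = k)) := by
    ext a
    have hd : Tg N a → ¬ Sc N a := fun hT hS => disjTS N hrow hsq hS hT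
    simp only [Finset.mem_filter, Finset.mem_union, Finset.mem_univ, true_and]
    tauto
  have hdisj : Disjoint
      ((Finset.univ : Finset (Fin n)).filter (fun a => ¬ Sc N a ∧ ¬ Tg N a ∧ β a = k))
      ((Finset.univ : Finset (Fin n)).filter (fun a => Tg N a ∧ β a = k)) := by
    rw [Finset.disjoint_left]
    intro a ha1 ha2
    simp only [Finset.mem_filter] at ha1 ha2
    exact ha1.2.2.1 ha2.2.1
  rw [hsplit, Finset.card_union_of_disjoint hdisj,
    card_dot β N hsq hrow hcol m hm b hb nm hnm k, card_tgt_fiber β N hrow m hm k]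

include hsq hrow hcol hm in
lemma card_nTg (b : Fin p → ℕ)
    (hb : ∀ k, (Finset.univ.filter fun x => β x = k).card = b k)
    (nm : Fin p → ℕ)
    (hnm : ∀ i, nm i + (∑ j, (m i j + m j i)) = b i) (k : Fin p) :
    ((Finset.univ : Finset (Fin n)).filter (fun a => ¬ Tg N a ∧ β a = k)).card
      = nm k + ∑ l : Fin p, m l k := by
  have hsplit : ((Finset.univ : Finset (Fin n)).filter (fun a => ¬ Tg N a ∧ β a = k))
      = ((Finset.univ : Finset (Fin n)).filter (fun a => ¬ Sc N a ∧ ¬ Tg N a ∧ β a = k))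
        ∪ ((Finset.univ : Finset (Fin n)).filter (fun a => Sc N a ∧ β a = k)) := by
    ext a
    have hd : Sc N a → ¬ Tg N a := fun hS hT => disjTS N hrow hsq hS hT
    simp only [Finset.mem_filter, Finset.mem_union, Finset.mem_univ, true_and]
    tauto
  have hdisj : Disjoint
      ((Finset.univ : Finset (Fin n)).filter (fun a => ¬ Sc N a ∧ ¬ Tg N a ∧ β a = k))
      ((Finset.univ : Finset (Fin n)).filter (fun a => Sc N a ∧ β a = k)) := by
    rw [Finset.disjoint_left]
    intro a ha1 ha2
    simp only [Finset.mem_filter] at ha1 ha2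
    exact ha1.2.1 ha2.2.1
  rw [hsplit, Finset.card_union_of_disjoint hdisj,
    card_dot β N hsq hrow hcol m hm b hb nm hnm k, card_src_fiber β N hrow hcol m hm k]

end BlockCounts

lemma sum_tri_factor {p : ℕ} (X Y : Fin p → ℤ) :
    (∑ c : Fin p, ∑ d : Fin p, if c ≤ d then X c * Y d else 0)
      = ∑ d : Fin p, Y d * ∑ c : Fin p, (if c ≤ d then X c else 0) := by
  rw [Finset.sum_comm]
  refine Finset.sum_congr rfl fun d _ => ?_
  rw [Finset.mul_sum]
  refine Finset.sum_congr rfl fun c _ => ?_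
  by_cases h : c ≤ d
  · simp only [h, if_true]; ring
  · simp [h]

lemma sum_tri_factor' {p : ℕ} (X Y : Fin p → ℤ) :
    (∑ i : Fin p, ∑ x : Fin p, if x ≤ i then X i * Y x else 0)
      = ∑ i : Fin p, X i * ∑ x : Fin p, (if x ≤ i then Y x else 0) := by
  refine Finset.sum_congr rfl fun i _ => ?_
  rw [Finset.mul_sum]
  refine Finset.sum_congr rfl fun x _ => ?_
  by_cases h : x ≤ i
  · simp [h]
  · simp [h]

lemma final_algebra {p : ℕ} (B NM : Fin p → ℤ) (M : Fin p → Fin p → ℤ) :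
    (∑ c : Fin p, ∑ d : Fin p, if c ≤ d then B c * B d else 0)
      - ((∑ c : Fin p, ∑ d : Fin p, if c ≤ d then
            (NM c + ∑ l : Fin p, M c l) * (NM d + ∑ l : Fin p, M l d) else 0)
        + ∑ c : Fin p × Fin p, ∑ d : Fin p × Fin p,
            if c.1 ≤ d.1 ∧ c.2 ≤ d.2 then M c.1 c.2 * M d.1 d.2 else 0)
    = (∑ i : Fin p, ∑ x : Fin p, if x ≤ i then B i * B x else 0)
      - (∑ i : Fin p, ∑ j : Fin p, M i j *
          ((∑ i' : Fin p, if i' ≤ j then (NM i' + ∑ j' : Fin p, M i' j') else 0)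
            + ∑ i' : Fin p, ∑ j' : Fin p, if j' ≤ j ∧ i' ≤ i then M i' j' else 0))
      - ∑ i : Fin p, NM i *
          (∑ i' : Fin p, if i' ≤ i then (NM i' + ∑ j' : Fin p, M i' j') else 0) := by
  have e1 : (∑ c : Fin p, ∑ d : Fin p, if c ≤ d then B c * B d else 0)
      = ∑ i : Fin p, ∑ x : Fin p, if x ≤ i then B i * B x else 0 :=
    (sum_tri_factor B B).trans (sum_tri_factor' B B).symm
  have e2 : (∑ c : Fin p, ∑ d : Fin p, if c ≤ d then
        (NM c + ∑ l : Fin p, M c l) * (NM d + ∑ l : Fin p, M l d) else 0)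
      = (∑ i : Fin p, NM i *
          (∑ i' : Fin p, if i' ≤ i then (NM i' + ∑ j' : Fin p, M i' j') else 0))
        + ∑ i : Fin p, ∑ j : Fin p, M i j *
          (∑ i' : Fin p, if i' ≤ j then (NM i' + ∑ j' : Fin p, M i' j') else 0) := by
    rw [sum_tri_factor (fun c => NM c + ∑ l : Fin p, M c l)
      (fun d => NM d + ∑ l : Fin p, M l d)]
    show (∑ d : Fin p, (NM d + ∑ l : Fin p, M l d) *
        ∑ c : Fin p, (if c ≤ d then NM c + ∑ j' : Fin p, M c j' else 0)) = _
    have step : ∀ d : Fin p, (NM d + ∑ l : Fin p, M l d) *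
        (∑ c : Fin p, (if c ≤ d then NM c + ∑ j' : Fin p, M c j' else 0))
        = NM d * (∑ c : Fin p, (if c ≤ d then NM c + ∑ j' : Fin p, M c j' else 0))
          + ∑ i : Fin p, M i d *
            (∑ c : Fin p, (if c ≤ d then NM c + ∑ j' : Fin p, M c j' else 0)) := by
      intro d
      rw [add_mul, Finset.sum_mul]
    calc (∑ d : Fin p, (NM d + ∑ l : Fin p, M l d) *
          ∑ c : Fin p, (if c ≤ d then NM c + ∑ j' : Fin p, M c j' else 0))
        = ∑ d : Fin p, (NM d * (∑ c : Fin p, (if c ≤ d then NM c + ∑ j' : Fin p, M c j' else 0))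
            + ∑ i : Fin p, M i d *
              (∑ c : Fin p, (if c ≤ d then NM c + ∑ j' : Fin p, M c j' else 0))) :=
          Finset.sum_congr rfl fun d _ => step d
      _ = (∑ d : Fin p, NM d * (∑ c : Fin p, (if c ≤ d then NM c + ∑ j' : Fin p, M c j' else 0)))
            + ∑ d : Fin p, ∑ i : Fin p, M i d *
              (∑ c : Fin p, (if c ≤ d then NM c + ∑ j' : Fin p, M c j' else 0)) :=
          Finset.sum_add_distrib
      _ = (∑ d : Fin p, NM d * (∑ c : Fin p, (if c ≤ d then NM c + ∑ j' : Fin p, M c j' else 0)))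
            + ∑ i : Fin p, ∑ d : Fin p, M i d *
              (∑ c : Fin p, (if c ≤ d then NM c + ∑ j' : Fin p, M c j' else 0)) := by
          rw [Finset.sum_comm]
  have e3 : (∑ c : Fin p × Fin p, ∑ d : Fin p × Fin p,
        if c.1 ≤ d.1 ∧ c.2 ≤ d.2 then M c.1 c.2 * M d.1 d.2 else 0)
      = ∑ i : Fin p, ∑ j : Fin p, ∑ i' : Fin p, ∑ j' : Fin p,
          if j' ≤ j ∧ i' ≤ i then M i j * M i' j' else 0 := by
    rw [Fintype.sum_prod_type]
    have inner : ∀ c1 c2 : Fin p, (∑ d : Fin p × Fin p,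
        if c1 ≤ d.1 ∧ c2 ≤ d.2 then M c1 c2 * M d.1 d.2 else 0)
        = ∑ d1 : Fin p, ∑ d2 : Fin p,
            if c1 ≤ d1 ∧ c2 ≤ d2 then M c1 c2 * M d1 d2 else 0 :=
      fun c1 c2 => Fintype.sum_prod_type _
    simp only [inner]
    rw [sum_swap4 (F := fun c1 c2 d1 d2 =>
      if c1 ≤ d1 ∧ c2 ≤ d2 then M c1 c2 * M d1 d2 else 0)]
    refine Finset.sum_congr rfl fun d1 _ => Finset.sum_congr rfl fun d2 _ =>
      Finset.sum_congr rfl fun c1 _ => Finset.sum_congr rfl fun c2 _ => ?_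
    by_cases h1 : c1 ≤ d1 <;> by_cases h2 : c2 ≤ d2 <;> simp [h1, h2, mul_comm]
  have e4 : (∑ i : Fin p, ∑ j : Fin p, M i j *
        ((∑ i' : Fin p, if i' ≤ j then (NM i' + ∑ j' : Fin p, M i' j') else 0)
          + ∑ i' : Fin p, ∑ j' : Fin p, if j' ≤ j ∧ i' ≤ i then M i' j' else 0))
      = (∑ i : Fin p, ∑ j : Fin p, M i j *
          (∑ i' : Fin p, if i' ≤ j then (NM i' + ∑ j' : Fin p, M i' j') else 0))
        + ∑ i : Fin p, ∑ j : Fin p, ∑ i' : Fin p, ∑ j' : Fin p,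
            if j' ≤ j ∧ i' ≤ i then M i j * M i' j' else 0 := by
    rw [← Finset.sum_add_distrib]
    refine Finset.sum_congr rfl fun i _ => ?_
    rw [← Finset.sum_add_distrib]
    refine Finset.sum_congr rfl fun j _ => ?_
    rw [mul_add]
    congr 1
    rw [Finset.mul_sum]
    refine Finset.sum_congr rfl fun i' _ => ?_
    rw [Finset.mul_sum]
    refine Finset.sum_congr rfl fun j' _ => ?_
    by_cases h : j' ≤ j ∧ i' ≤ i <;> simp [h]
  rw [e1, e2, e3, e4]
  ring

/-- Dimension formula for the parabolic orbit of a 2-nilpotent matrix `N`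
in normal form.  Here `m i j` is the multiplicity of the indecomposable
`U_{i,j}` (the number of arrows of the enhanced oriented link pattern of `N`
from block `j` to block `i`), `nm i` the multiplicity of `V_i` (dots in
block `i`), and `a_k(M) = dim Hom(V_k, M)`, `b_{k,l}(M) = dim Hom(U_{k,l}, M)`
are expanded via `dim Hom(V_k,V_i) = dim Hom(V_k,U_{i,j}) = δ_{i≤k}`,
`dim Hom(U_{k,l},V_i) = δ_{i≤l}`, `dim Hom(U_{k,l},U_{i,j}) = δ_{i≤l} +
δ_{j≤l}·δ_{i≤k}`.  The orbit dimension `dim P − dim Stab_P(N)` equals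
`Σ_{i} Σ_{x≤i} b_i b_x − Σ_{i,j} m_{i,j} b_{i,j}(M) − Σ_i n_i a_i(M)`. -/
theorem parabolic_orbit_dimension (n p : ℕ) (b : Fin p → ℕ) (β : Fin n → Fin p)
    (hmono : Monotone β)
    (hb : ∀ k, (Finset.univ.filter fun x => β x = k).card = b k)
    (N : Matrix (Fin n) (Fin n) ℂ) (hsq : N ^ 2 = 0)
    (h01 : ∀ i j, N i j = 0 ∨ N i j = 1)
    (hrow : ∀ i j j', N i j ≠ 0 → N i j' ≠ 0 → j = j')
    (hcol : ∀ i i' j, N i j ≠ 0 → N i' j ≠ 0 → i = i')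
    (m : Fin p → Fin p → ℕ)
    (hm : ∀ i j, m i j =
      Set.ncard {q : Fin n × Fin n | N q.1 q.2 ≠ 0 ∧ β q.1 = i ∧ β q.2 = j})
    (nm : Fin p → ℕ)
    (hnm : ∀ i, nm i + (∑ j, (m i j + m j i)) = b i) :
    let afun : Fin p → ℤ := fun k =>
      ∑ i' : Fin p, if i' ≤ k then ((nm i' : ℤ) + ∑ j' : Fin p, (m i' j' : ℤ)) else 0
    let bfun : Fin p → Fin p → ℤ := fun k l =>
      afun l + ∑ i' : Fin p, ∑ j' : Fin p, if j' ≤ l ∧ i' ≤ k then (m i' j' : ℤ) else 0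
    (Module.finrank ℂ (pAlg β) : ℤ) - (Module.finrank ℂ (stabAlg β N) : ℤ) =
      (∑ i : Fin p, ∑ x : Fin p, if x ≤ i then ((b i : ℤ) * (b x : ℤ)) else 0) -
        (∑ i : Fin p, ∑ j : Fin p, (m i j : ℤ) * bfun i j) -
        (∑ i : Fin p, (nm i : ℤ) * afun i) := by
  intro afun bfun
  rw [finrank_pAlg β, finrank_stabAlg β N hsq h01 hrow hcol, card_free_split β N hsq hrow]
  -- evaluate the parabolic dimension
  have hcardP : ((Finset.univ ×ˢ Finset.univ).filter
        (fun q : Fin n × Fin n => β q.1 ≤ β q.2)).card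
      = ∑ c : Fin p, ∑ d : Fin p, if c ≤ d then b c * b d else 0 := by
    have heq : ((Finset.univ ×ˢ Finset.univ).filter
        (fun q : Fin n × Fin n => β q.1 ≤ β q.2))
        = ((Finset.univ ×ˢ Finset.univ).filter
            (fun q : Fin n × Fin n => (fun _ : Fin n => True) q.1 ∧
              (fun _ : Fin n => True) q.2 ∧ β q.1 ≤ β q.2)) := by
      ext q; simp
    rw [heq, card_pair_filter β (fun _ => True) (fun _ => True) (· ≤ ·)]
    refine Finset.sum_congr rfl fun c _ => Finset.sum_congr rfl fun d _ => ?_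
    by_cases h : c ≤ d
    · simp only [h, if_true]
      have e1 : (Finset.univ.filter fun a => True ∧ β a = c)
          = (Finset.univ.filter fun a => β a = c) := by ext a; simp
      have e2 : (Finset.univ.filter fun a => True ∧ β a = d)
          = (Finset.univ.filter fun a => β a = d) := by ext a; simp
      rw [e1, e2, hb c, hb d]
    · simp [h]
  -- evaluate F1
  have hF1 : ((Finset.univ ×ˢ Finset.univ).filter
        (fun q : Fin n × Fin n => ¬ Sc N q.1 ∧ ¬ Tg N q.2 ∧ β q.1 ≤ β q.2)).card
      = ∑ c : Fin p, ∑ d : Fin p, if c ≤ d then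
          (nm c + ∑ l : Fin p, m c l) * (nm d + ∑ l : Fin p, m l d) else 0 := by
    rw [card_pair_filter β (fun a => ¬ Sc N a) (fun a => ¬ Tg N a) (· ≤ ·)]
    refine Finset.sum_congr rfl fun c _ => Finset.sum_congr rfl fun d _ => ?_
    by_cases h : c ≤ d
    · simp only [h, if_true]
      rw [card_nSc β N hsq hrow hcol m hm b hb nm hnm c,
        card_nTg β N hsq hrow hcol m hm b hb nm hnm d]
    · simp [h]
  -- evaluate F2
  have hF2 : ((Finset.univ ×ˢ Finset.univ).filter
        (fun q : Fin n × Fin n => Tg N q.1 ∧ Tg N q.2 ∧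
          (β q.1 ≤ β q.2 ∧ β (gN N q.1) ≤ β (gN N q.2)))).card
      = ∑ c : Fin p × Fin p, ∑ d : Fin p × Fin p,
          if c.1 ≤ d.1 ∧ c.2 ≤ d.2 then m c.1 c.2 * m d.1 d.2 else 0 := by
    rw [card_pair_filter (fun a => (β a, β (gN N a))) (Tg N) (Tg N)
      (fun x y => x.1 ≤ y.1 ∧ x.2 ≤ y.2)]
    refine Finset.sum_congr rfl fun c _ => Finset.sum_congr rfl fun d _ => ?_
    by_cases h : c.1 ≤ d.1 ∧ c.2 ≤ d.2
    · simp only [h, if_true]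
      rw [card_tgt_block β N hrow m hm c, card_tgt_block β N hrow m hm d]
    · simp [h]
  rw [hcardP, hF1, hF2]
  push_cast
  exact final_algebra (fun k => (b k : ℤ)) (fun k => (nm k : ℤ)) (fun i j => (m i j : ℤ))
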